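/- arXiv:2412.07510 — 2 statements merged into one kernel-verified Lean document; each statement's English description precedes it below -/
import Mathlib

section
/- For any finite simple graph G, the domination number equals the Roman domination number, γ(G) = γ_R(G), if and only if G has no edges (i.e., G is the complement of a complete graph on its vertex set). -/
/-- The set of nonzero zero-divisors of a commutative ring `R`. -/
def zdvSet (R : Type*) [CommRing R] : Set R :=
  {x | x ≠ 0 ∧ ∃ y, y ≠ 0 ∧ x * y = 0}

/-- The zero-divisor graph `Γ(R)`: vertices are the nonzero zero-divisors of `R`,
with distinct `x`, `y` adjacent iff `x * y = 0`. -/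
def zeroDivisorGraph (R : Type*) [CommRing R] : SimpleGraph (zdvSet R) where
  Adj a b := a ≠ b ∧ (a : R) * (b : R) = 0
  symm := by
    constructor
    rintro a b ⟨hne, hmul⟩
    exact ⟨hne.symm, by rwa [mul_comm]⟩
  loopless := by constructor; rintro a ⟨hne, _⟩; exact hne rfl

/-- A Roman dominating function: every vertex with value `0` has a neighbour
with value `2`. -/
def IsRomanDominating {V : Type*} (G : SimpleGraph V) (f : V → Fin 3) : Prop :=
  ∀ u, f u = 0 → ∃ v, G.Adj u v ∧ f v = 2

/-- The Roman domination number: the minimum weight of a (finitely supported)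
Roman dominating function. -/
noncomputable def romanDominationNumber {V : Type*} (G : SimpleGraph V) : ℕ :=
  sInf {w | ∃ f : V → Fin 3, IsRomanDominating G f ∧
    {v | f v ≠ 0}.Finite ∧ w = ∑ᶠ v, (f v : ℕ)}

/-- The domination number of a graph: the minimum size of a dominating set. -/
noncomputable def dominationNumber {V : Type*} (G : SimpleGraph V) : ℕ :=
  sInf {n | ∃ S : Finset V, (∀ v, v ∉ S → ∃ u ∈ S, G.Adj v u) ∧ n = S.card}

theorem stmt_18 (V : Type*) [Fintype V] (G : SimpleGraph V) :
    dominationNumber G = romanDominationNumber G ↔ G = ⊥ := by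
  classical
  constructor
  · intro h
    by_contra hG
    obtain ⟨u, v, huv⟩ : ∃ u v, G.Adj u v := by
      by_contra hne
      push_neg at hne
      exact hG (by ext a b; simp [hne a b])
    -- the roman domination number is attained
    have hRne : {w | ∃ f : V → Fin 3, IsRomanDominating G f ∧
        {v | f v ≠ 0}.Finite ∧ w = ∑ᶠ v, (f v : ℕ)}.Nonempty := by
      refine ⟨∑ᶠ v : V, ((1 : Fin 3) : ℕ), fun _ => (1 : Fin 3), ?_, ?_, rfl⟩
      · intro x hx; exact ((by decide : (1 : Fin 3) ≠ 0) hx).elim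
      · exact Set.Finite.subset Set.finite_univ (Set.subset_univ _)
    obtain ⟨f, hf, hfin, hw⟩ := Nat.sInf_mem hRne
    have hwsum : romanDominationNumber G = ∑ x, (f x : ℕ) := by
      rw [← finsum_eq_sum_of_fintype]; exact hw
    set S : Finset V := Finset.univ.filter (fun x => f x ≠ 0) with hS
    have hSmem : ∀ x, x ∈ S ↔ f x ≠ 0 := by intro x; simp [hS]
    have hSdom : ∀ x, x ∉ S → ∃ y ∈ S, G.Adj x y := by
      intro x hx
      have hx0 : f x = 0 := by by_contra h0; exact hx ((hSmem x).mpr h0)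
      obtain ⟨y, hadj, hy2⟩ := hf x hx0
      exact ⟨y, (hSmem y).mpr (by rw [hy2]; decide), hadj⟩
    have hdomle : dominationNumber G ≤ S.card := Nat.sInf_le ⟨S, hSdom, rfl⟩
    have hone : ∀ x ∈ S, 1 ≤ (f x : ℕ) := by
      intro x hx
      have h1 := (hSmem x).mp hx
      exact Nat.one_le_iff_ne_zero.mpr fun h0 => h1 (Fin.ext h0)
    have hsumS : ∑ x, (f x : ℕ) = ∑ x ∈ S, (f x : ℕ) := by
      refine (Finset.sum_subset (Finset.subset_univ S) ?_).symm
      intro x _ hx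
      have hx0 : f x = 0 := by
        by_contra h0; exact hx ((hSmem x).mpr h0)
      rw [hx0]; rfl
    have hcardle : S.card ≤ ∑ x, (f x : ℕ) := by
      rw [hsumS, Finset.card_eq_sum_ones]
      exact Finset.sum_le_sum hone
    have hcardeq : S.card = ∑ x, (f x : ℕ) := by
      refine le_antisymm hcardle ?_
      rw [← hwsum, ← h]; exact hdomle
    have hfone : ∀ x ∈ S, (f x : ℕ) = 1 := by
      have heq : ∑ x ∈ S, (f x : ℕ) = ∑ x ∈ S, 1 := by
        rw [← Finset.card_eq_sum_ones, hcardeq, hsumS]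
      intro x hx
      by_contra hne1
      have h2 : 1 < (f x : ℕ) := lt_of_le_of_ne (hone x hx) (Ne.symm hne1)
      have hlt : ∑ x ∈ S, 1 < ∑ x ∈ S, (f x : ℕ) :=
        Finset.sum_lt_sum hone ⟨x, hx, h2⟩
      exact (ne_of_gt hlt) heq
    have hno2 : ∀ x, f x ≠ 2 := by
      intro x hx2
      have hxS : x ∈ S := (hSmem x).mpr (by rw [hx2]; decide)
      have := hfone x hxS
      rw [hx2] at this
      exact absurd this (by decide)
    have hSuniv : S = Finset.univ := by
      refine Finset.eq_univ_iff_forall.mpr fun x => (hSmem x).mpr ?_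
      intro h0
      obtain ⟨y, _, hy2⟩ := hf x h0
      exact hno2 y hy2
    have hgamma : dominationNumber G = Fintype.card V := by
      have : ∑ x, (f x : ℕ) = Fintype.card V := by
        calc ∑ x, (f x : ℕ) = ∑ x ∈ S, (f x : ℕ) := hsumS
          _ = ∑ _x ∈ S, 1 := Finset.sum_congr rfl hfone
          _ = S.card := (Finset.card_eq_sum_ones S).symm
          _ = Fintype.card V := by rw [hSuniv, Finset.card_univ]
      rw [h, hwsum, this]
    -- but removing u from univ gives a smaller dominating set
    have hdom2 : dominationNumber G ≤ (Finset.univ.erase u).card := by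
      refine Nat.sInf_le ⟨Finset.univ.erase u, ?_, rfl⟩
      intro x hx
      have hxu : x = u := by
        by_contra hxu
        exact hx (Finset.mem_erase.mpr ⟨hxu, Finset.mem_univ x⟩)
      refine ⟨v, Finset.mem_erase.mpr ⟨(G.ne_of_adj huv).symm, Finset.mem_univ v⟩, ?_⟩
      rw [hxu]; exact huv
    have hcard : (Finset.univ.erase u).card = Fintype.card V - 1 := by
      rw [Finset.card_erase_of_mem (Finset.mem_univ u), Finset.card_univ]
    have hpos : 0 < Fintype.card V := Fintype.card_pos_iff.mpr ⟨u⟩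
    rw [hcard, hgamma] at hdom2
    exact absurd hdom2 (Nat.not_le.mpr (Nat.sub_lt hpos one_pos))
  · intro h
    subst h
    have hdom : dominationNumber (⊥ : SimpleGraph V) = Fintype.card V := by
      apply le_antisymm
      · exact Nat.sInf_le ⟨Finset.univ, fun x hx => absurd (Finset.mem_univ x) hx,
          (Finset.card_univ).symm⟩
      · refine le_csInf ⟨Finset.univ.card, Finset.univ,
            fun x hx => absurd (Finset.mem_univ x) hx, rfl⟩ ?_
        rintro n ⟨S, hSd, rfl⟩
        have : S = Finset.univ := by
          refine Finset.eq_univ_iff_forall.mpr fun x => ?_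
          by_contra hx
          obtain ⟨y, _, hadj⟩ := hSd x hx
          exact hadj
        rw [this, Finset.card_univ]
    have hrom : romanDominationNumber (⊥ : SimpleGraph V) = Fintype.card V := by
      apply le_antisymm
      · refine Nat.sInf_le ⟨fun _ => (1 : Fin 3), ?_, ?_, ?_⟩
        · intro x hx; exact ((by decide : (1 : Fin 3) ≠ 0) hx).elim
        · exact Set.Finite.subset Set.finite_univ (Set.subset_univ _)
        · rw [finsum_eq_sum_of_fintype]
          have h1 : ((1 : Fin 3) : ℕ) = 1 := rfl
          simp only [h1, Finset.sum_const, Finset.card_univ, smul_eq_mul, mul_one]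
      · refine le_csInf ⟨∑ᶠ v : V, ((1 : Fin 3) : ℕ), fun _ => (1 : Fin 3),
            fun x hx => ((by decide : (1 : Fin 3) ≠ 0) hx).elim,
            Set.Finite.subset Set.finite_univ (Set.subset_univ _), rfl⟩ ?_
        rintro w ⟨f, hf, _, rfl⟩
        rw [finsum_eq_sum_of_fintype]
        have : ∀ x : V, 1 ≤ (f x : ℕ) := by
          intro x
          have h0 : f x ≠ 0 := by
            intro h0
            obtain ⟨y, hadj, _⟩ := hf x h0
            exact hadj
          have : (f x : ℕ) ≠ 0 := fun h1 => h0 (Fin.ext h1)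
          omega
        calc Fintype.card V = ∑ _x : V, 1 := by
              rw [Finset.sum_const, Finset.card_univ, smul_eq_mul, mul_one]
          _ ≤ ∑ x, (f x : ℕ) := Finset.sum_le_sum fun x _ => this x
    rw [hdom, hrom]
end

section
/- For every integer n ≥ 1 the Roman domination number of the path graph on n vertices is ⌈2n/3⌉, and for every integer n ≥ 3 the Roman domination number of the cycle graph on n vertices is ⌈2n/3⌉. -/
/-- The explicit Roman dominating function. -/
def rf (n : ℕ) (v : Fin n) : Fin 3 :=
  if (v : ℕ) % 3 = 1 then 2 else if n % 3 = 1 ∧ (v : ℕ) = n - 1 then 1 else 0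

lemma rf_dominating {n : ℕ} (G : SimpleGraph (Fin n))
    (hadj : ∀ u v : Fin n, (v : ℕ) = (u : ℕ) + 1 → G.Adj u v) :
    IsRomanDominating G (rf n) := by
  intro u hu0
  unfold rf at hu0
  split_ifs at hu0 with h1 h2
  · exact absurd hu0 (by decide)
  · exact absurd hu0 (by decide)
  have hun : (u : ℕ) < n := u.isLt
  have h2' : ¬ (n % 3 = 1) ∨ ¬ ((u : ℕ) = n - 1) := not_and_or.mp h2
  have hcase : (u : ℕ) % 3 = 0 ∨ (u : ℕ) % 3 = 2 := by omega
  rcases hcase with hc | hc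
  · -- use successor
    have hlt : (u : ℕ) + 1 < n := by
      rcases h2' with h | h <;> omega
    refine ⟨⟨(u : ℕ) + 1, hlt⟩, hadj u _ rfl, ?_⟩
    unfold rf
    have hv : ((⟨(u : ℕ) + 1, hlt⟩ : Fin n) : ℕ) = (u : ℕ) + 1 := rfl
    rw [hv, if_pos (by omega)]
  · -- use predecessor
    have hge : 2 ≤ (u : ℕ) := by omega
    have hlt : (u : ℕ) - 1 < n := by omega
    refine ⟨⟨(u : ℕ) - 1, hlt⟩, (hadj _ u (by simp; omega)).symm, ?_⟩
    unfold rf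
    have hv : ((⟨(u : ℕ) - 1, hlt⟩ : Fin n) : ℕ) = (u : ℕ) - 1 := rfl
    rw [hv, if_pos (by omega)]

lemma sum_ind3 (n : ℕ) :
    ∑ k ∈ Finset.range n, (if k % 3 = 1 then 2 else 0) = 2 * ((n + 1) / 3) := by
  induction n with
  | zero => simp
  | succ m ih => rw [Finset.sum_range_succ, ih]; split_ifs with h <;> omega

lemma rf_weight {n : ℕ} (hn : 1 ≤ n) :
    ∑ v : Fin n, ((rf n v : ℕ)) = (2 * n + 2) / 3 := by
  have hpt : ∀ v : Fin n, ((rf n v : ℕ)) =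
      (fun k : ℕ => (if k % 3 = 1 then 2 else 0) +
        (if n % 3 = 1 ∧ k = n - 1 then 1 else 0)) (v : ℕ) := by
    intro v
    have hv : (v : ℕ) < n := v.isLt
    unfold rf
    by_cases a : (v : ℕ) % 3 = 1
    · rw [if_pos a]
      have hb : ¬ (n % 3 = 1 ∧ (v : ℕ) = n - 1) := by rintro ⟨h1, h2⟩; omega
      simp only [if_pos a, if_neg hb]
      rfl
    · rw [if_neg a]
      simp only [if_neg a]
      by_cases b : n % 3 = 1 ∧ (v : ℕ) = n - 1
      · simp only [if_pos b]; rfl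
      · simp only [if_neg b]; rfl
  rw [Finset.sum_congr rfl (fun v _ => hpt v),
    Fin.sum_univ_eq_sum_range (fun k => (if k % 3 = 1 then 2 else 0) +
        (if n % 3 = 1 ∧ k = n - 1 then 1 else 0)) n,
    Finset.sum_add_distrib, sum_ind3]
  by_cases h : n % 3 = 1
  · simp only [h, true_and]
    rw [Finset.sum_ite_eq' (Finset.range n) (n - 1) (fun _ => 1)]
    rw [if_pos (Finset.mem_range.mpr (by omega))]
    omega
  · simp only [h, false_and, if_false, Finset.sum_const_zero]
    omega

lemma ceil_val (n : ℕ) (hn : 1 ≤ n) : ⌈(2 * n : ℚ) / 3⌉₊ = (2 * n + 2) / 3 := by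
  have h1 : 1 ≤ (2 * n + 2) / 3 := by omega
  rw [Nat.ceil_eq_iff (by omega)]
  constructor
  · rw [lt_div_iff₀ (by norm_num)]
    have : (((2 * n + 2) / 3 - 1 : ℕ) : ℚ) * 3 = (((2 * n + 2) / 3 - 1) * 3 : ℕ) := by
      push_cast; ring
    rw [this]
    exact_mod_cast (by omega : ((2 * n + 2) / 3 - 1) * 3 < 2 * n)
  · rw [div_le_iff₀ (by norm_num)]
    have : (((2 * n + 2) / 3 : ℕ) : ℚ) * 3 = (((2 * n + 2) / 3) * 3 : ℕ) := by
      push_cast; ring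
    rw [this]
    exact_mod_cast (by omega : 2 * n ≤ ((2 * n + 2) / 3) * 3)

lemma lower_bound {n : ℕ} (G : SimpleGraph (Fin n)) [DecidableRel G.Adj]
    (hdeg : ∀ w, (G.neighborFinset w).card ≤ 2)
    (f : Fin n → Fin 3) (hf : IsRomanDominating G f) :
    2 * n ≤ 3 * ∑ v, (f v : ℕ) := by
  classical
  set V0 := Finset.univ.filter (fun v => f v = 0) with hV0
  set V1 := Finset.univ.filter (fun v => f v = 1) with hV1
  set V2 := Finset.univ.filter (fun v => f v = 2) with hV2
  have hcover : V0 ⊆ V2.biUnion (fun w => G.neighborFinset w) := by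
    intro u hu
    simp only [hV0, Finset.mem_filter] at hu
    obtain ⟨v, hadj, hv2⟩ := hf u hu.2
    refine Finset.mem_biUnion.mpr ⟨v, ?_, ?_⟩
    · simp [hV2, hv2]
    · simp only [SimpleGraph.mem_neighborFinset]
      exact hadj.symm
  have h1 : V0.card ≤ 2 * V2.card := by
    calc V0.card ≤ (V2.biUnion (fun w => G.neighborFinset w)).card :=
          Finset.card_le_card hcover
      _ ≤ ∑ w ∈ V2, (G.neighborFinset w).card := Finset.card_biUnion_le
      _ ≤ ∑ _w ∈ V2, 2 := Finset.sum_le_sum fun w _ => hdeg w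
      _ = 2 * V2.card := by rw [Finset.sum_const, smul_eq_mul, mul_comm]
  have hpart : n ≤ V0.card + V1.card + V2.card := by
    have hsub : (Finset.univ : Finset (Fin n)) ⊆ V0 ∪ V1 ∪ V2 := by
      intro v _
      simp only [hV0, hV1, hV2, Finset.mem_union, Finset.mem_filter,
        Finset.mem_univ, true_and]
      have h3 : ∀ x : Fin 3, x = 0 ∨ x = 1 ∨ x = 2 := by decide
      rcases h3 (f v) with h | h | h <;> tauto
    calc n = (Finset.univ : Finset (Fin n)).card := (Finset.card_fin n).symm
      _ ≤ (V0 ∪ V1 ∪ V2).card := Finset.card_le_card hsub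
      _ ≤ (V0 ∪ V1).card + V2.card := Finset.card_union_le _ _
      _ ≤ V0.card + V1.card + V2.card := by
          have := Finset.card_union_le V0 V1; omega
  have hd : Disjoint V1 V2 := by
    rw [Finset.disjoint_left]
    intro a ha hb
    simp only [hV1, hV2, Finset.mem_filter, Finset.mem_univ, true_and] at ha hb
    rw [ha] at hb
    exact absurd hb (by decide)
  have e1 : ∑ v ∈ V1, ((f v : ℕ)) = V1.card := by
    rw [Finset.sum_congr rfl (g := fun _ => 1) ?_]
    · simp
    · intro v hv
      simp only [hV1, Finset.mem_filter, Finset.mem_univ, true_and] at hv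
      rw [hv]; rfl
  have e2 : ∑ v ∈ V2, ((f v : ℕ)) = 2 * V2.card := by
    rw [Finset.sum_congr rfl (g := fun _ => 2) ?_]
    · rw [Finset.sum_const, smul_eq_mul, mul_comm]
    · intro v hv
      simp only [hV2, Finset.mem_filter, Finset.mem_univ, true_and] at hv
      rw [hv]; rfl
  have hsum : (V1 ∪ V2).card • 0 + (V1.card + 2 * V2.card : ℕ) ≤ ∑ v, (f v : ℕ) := by
    have hle := Finset.sum_le_sum_of_subset
      (Finset.subset_univ (V1 ∪ V2)) (f := fun v => ((f v : ℕ)))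
    rw [Finset.sum_union hd, e1, e2] at hle
    simpa using hle
  simp only [smul_zero, zero_add] at hsum
  omega

lemma path_deg {n : ℕ} [DecidableRel (SimpleGraph.pathGraph n).Adj] (w : Fin n) :
    ((SimpleGraph.pathGraph n).neighborFinset w).card ≤ 2 := by
  have hsub : ∀ u ∈ (SimpleGraph.pathGraph n).neighborFinset w,
      (u : ℕ) ∈ ({(w : ℕ) - 1, (w : ℕ) + 1} : Finset ℕ) := by
    intro u hu
    rw [SimpleGraph.mem_neighborFinset, SimpleGraph.pathGraph_adj] at hu
    simp only [Finset.mem_insert, Finset.mem_singleton]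
    omega
  calc ((SimpleGraph.pathGraph n).neighborFinset w).card
      ≤ ({(w : ℕ) - 1, (w : ℕ) + 1} : Finset ℕ).card :=
        Finset.card_le_card_of_injOn _ hsub Fin.val_injective.injOn
    _ ≤ 2 := le_trans (Finset.card_insert_le _ _) (by simp)

lemma cyc_succ_adj {n : ℕ} (hn : 2 ≤ n) {u v : Fin n} (h : (v : ℕ) = (u : ℕ) + 1) :
    (SimpleGraph.cycleGraph n).Adj u v := by
  rw [SimpleGraph.cycleGraph_adj']
  right
  rw [Fin.sub_def]
  show ((n - (u : ℕ)) + (v : ℕ)) % n = 1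
  have hu : (u : ℕ) < n := u.isLt
  have he : (n - (u : ℕ)) + (v : ℕ) = n + 1 := by omega
  rw [he, Nat.add_mod_left, Nat.mod_eq_of_lt (by omega)]

lemma cyc_deg {n : ℕ} (hn : 3 ≤ n) [DecidableRel (SimpleGraph.cycleGraph n).Adj]
    (w : Fin n) : ((SimpleGraph.cycleGraph n).neighborFinset w).card ≤ 2 := by
  haveI : NeZero n := ⟨by omega⟩
  have h1 : ((1 : Fin n) : ℕ) = 1 := by rw [Fin.val_one', Nat.mod_eq_of_lt (by omega)]
  have hsub : (SimpleGraph.cycleGraph n).neighborFinset w ⊆ {w - 1, w + 1} := by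
    intro u hu
    rw [SimpleGraph.mem_neighborFinset, SimpleGraph.cycleGraph_adj'] at hu
    simp only [Finset.mem_insert, Finset.mem_singleton]
    rcases hu with h | h
    · left
      have he : w - u = 1 := Fin.ext (by rw [h1]; exact h)
      rw [← he]
      exact (sub_sub_cancel w u).symm
    · right
      have he : u - w = 1 := Fin.ext (by rw [h1]; exact h)
      have := sub_eq_iff_eq_add.mp he
      rw [this, add_comm]
  exact le_trans (Finset.card_le_card hsub)
    (le_trans (Finset.card_insert_le _ _) (by simp))

theorem stmt_19 :
    (∀ n : ℕ, 1 ≤ n →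
      romanDominationNumber (SimpleGraph.pathGraph n) = ⌈(2 * n : ℚ) / 3⌉₊) ∧
    (∀ n : ℕ, 3 ≤ n →
      romanDominationNumber (SimpleGraph.cycleGraph n) = ⌈(2 * n : ℚ) / 3⌉₊) := by
  constructor
  · intro n hn
    classical
    have hdom : IsRomanDominating (SimpleGraph.pathGraph n) (rf n) :=
      rf_dominating _ (fun u v h => SimpleGraph.pathGraph_adj.mpr (Or.inl h.symm))
    have hmem : ((2 * n + 2) / 3 : ℕ) ∈ {w | ∃ f : Fin n → Fin 3,
        IsRomanDominating (SimpleGraph.pathGraph n) f ∧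
        {v | f v ≠ 0}.Finite ∧ w = ∑ᶠ v, (f v : ℕ)} :=
      ⟨rf n, hdom, Set.toFinite _, by rw [finsum_eq_sum_of_fintype, rf_weight hn]⟩
    rw [ceil_val n hn]
    refine le_antisymm (Nat.sInf_le hmem) (le_csInf ⟨_, hmem⟩ ?_)
    rintro w ⟨f, hf, -, rfl⟩
    have hlow := lower_bound _ path_deg f hf
    rw [finsum_eq_sum_of_fintype]
    omega
  · intro n hn
    classical
    have hn1 : 1 ≤ n := by omega
    have hdom : IsRomanDominating (SimpleGraph.cycleGraph n) (rf n) :=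
      rf_dominating _ (fun u v h => cyc_succ_adj (by omega) h)
    have hmem : ((2 * n + 2) / 3 : ℕ) ∈ {w | ∃ f : Fin n → Fin 3,
        IsRomanDominating (SimpleGraph.cycleGraph n) f ∧
        {v | f v ≠ 0}.Finite ∧ w = ∑ᶠ v, (f v : ℕ)} :=
      ⟨rf n, hdom, Set.toFinite _, by rw [finsum_eq_sum_of_fintype, rf_weight hn1]⟩
    rw [ceil_val n hn1]
    refine le_antisymm (Nat.sInf_le hmem) (le_csInf ⟨_, hmem⟩ ?_)
    rintro w ⟨f, hf, -, rfl⟩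
    have hlow := lower_bound _ (cyc_deg hn) f hf
    rw [finsum_eq_sum_of_fintype]
    omega
end
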